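/- arXiv:2310.02723 — 4 statements merged into one kernel-verified Lean document; each statement's English description precedes it below -/
import Mathlib

section
/- For each m ∈ ℕ let R_m := sup { r ∈ [0, ∞) : for every function f(z) = ∑_{n≥m} a_n zⁿ analytic on 𝔻 satisfying |f(z)| ≤ |z|^m for all z ∈ 𝔻, and for every ρ ∈ [0, r], the series ∑_{n≥m} |a_n| ρⁿ converges and is ≤ 1 }. Then R_m → 1 as m → ∞. (This is the statement that the Bohr radius R_{S_{m,−m} → id} of the pair (shift operator S_{m,−m} f(z) = z^{−m} f(z), identity) tends to 1.) -/
open Metric Filter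
open scoped NNReal

/-- The set of admissible Bohr radii for the pair `(S_{m,-m}, id)`: nonnegative `r`
such that for every `f(z) = ∑_{n≥m} aₙ zⁿ` analytic on the unit disk with
`|f(z)| ≤ |z|^m` there, the majorant series at every `ρ ∈ [0,r]` converges and is `≤ 1`. -/
def bohrSetShift (m : ℕ) : Set ℝ :=
  {r | 0 ≤ r ∧ ∀ (f : ℂ → ℂ) (A : ℕ → ℂ),
      (∀ z ∈ Metric.ball (0 : ℂ) 1, HasSum (fun n : ℕ => A n * z ^ n) (f z)) →
      (∀ n, n < m → A n = 0) →
      (∀ z ∈ Metric.ball (0 : ℂ) 1, ‖f z‖ ≤ ‖z‖ ^ m) →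
      ∀ ρ : ℝ, 0 ≤ ρ → ρ ≤ r →
        Summable (fun n : ℕ => ‖A n‖ * ρ ^ n) ∧ ∑' n : ℕ, ‖A n‖ * ρ ^ n ≤ 1}

private lemma bohr_hasFPS {f : ℂ → ℂ} {A : ℕ → ℂ}
    (hsum : ∀ z ∈ Metric.ball (0 : ℂ) 1, HasSum (fun n : ℕ => A n * z ^ n) (f z)) :
    HasFPowerSeriesOnBall f (FormalMultilinearSeries.ofScalars ℂ A) 0 1 := by
  constructor
  · apply ENNReal.le_of_forall_nnreal_lt
    intro r hr
    have hr1 : (r : ℝ) < 1 := by exact_mod_cast hr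
    have hz : ((r : ℝ) : ℂ) ∈ Metric.ball (0 : ℂ) 1 := by
      simp only [Metric.mem_ball, dist_zero_right, Complex.norm_real, Real.norm_eq_abs,
        abs_of_nonneg r.coe_nonneg]
      exact hr1
    have hs := (hsum _ hz).summable
    apply FormalMultilinearSeries.le_radius_of_tendsto _ (l := (0 : ℝ))
    have h0 := hs.tendsto_atTop_zero.norm
    simp only [norm_zero] at h0
    convert h0 using 2 with n
    rw [FormalMultilinearSeries.ofScalars_norm, norm_mul, norm_pow, Complex.norm_real,
      Real.norm_eq_abs, abs_of_nonneg r.coe_nonneg]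
  · exact one_pos
  · intro y hy
    have hy' : y ∈ Metric.ball (0 : ℂ) 1 := by
      rw [Metric.mem_ball, dist_zero_right]
      have := mem_emetric_ball_zero_iff.mp hy
      exact_mod_cast (by simpa [enorm_eq_nnnorm] using this : ‖y‖₊ < 1)
    have heq : (fun n : ℕ => FormalMultilinearSeries.ofScalars ℂ A n fun _ => y)
        = fun n : ℕ => A n * y ^ n := by
      funext n
      rw [FormalMultilinearSeries.ofScalars_apply_eq, smul_eq_mul]
    rw [heq, zero_add]
    exact hsum y hy'

private lemma bohr_coeff_le_one {f : ℂ → ℂ} {A : ℕ → ℂ}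
    (hsum : ∀ z ∈ Metric.ball (0 : ℂ) 1, HasSum (fun n : ℕ => A n * z ^ n) (f z))
    (
hb : ∀ z ∈ Metric.ball (0 : ℂ) 1, ‖f z‖ ≤ 1) (n : ℕ) : ‖A n‖ ≤ 1 := by
  have hp := bohr_hasFPS hsum
  have key : ∀ r : ℝ≥0, 0 < r → (r : ℝ) < 1 → ‖A n‖ * (r : ℝ) ^ n ≤ 1 := by
    intro r hr0 hr1
    have hsub : Metric.closedBall (0 : ℂ) r ⊆ Metric.ball (0 : ℂ) 1 := fun z hz => by
      rw [Metric.mem_closedBall] at hz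
      rw [Metric.mem_ball]
      exact lt_of_le_of_lt hz hr1
    have hd : DifferentiableOn ℂ f (Metric.closedBall (0 : ℂ) r) := by
      intro z hz
      have hz' : z ∈ Metric.eball (0 : ℂ) 1 := by
        rw [mem_emetric_ball_zero_iff, enorm_eq_nnnorm]
        have := hsub hz
        rw [Metric.mem_ball, dist_zero_right] at this
        exact_mod_cast (by simpa [← coe_nnnorm, NNReal.coe_lt_one] using this : ‖z‖₊ < 1)
      exact (hp.analyticAt_of_mem hz').differentiableAt.differentiableWithinAt
    have hq := hd.hasFPowerSeriesOnBall hr0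
    have hpq : cauchyPowerSeries f 0 r = FormalMultilinearSeries.ofScalars ℂ A :=
      hq.hasFPowerSeriesAt.eq_formalMultilinearSeries hp.hasFPowerSeriesAt
    have h1 : ‖A n‖ = ‖cauchyPowerSeries f 0 (r : ℝ) n‖ := by
      rw [hpq, FormalMultilinearSeries.ofScalars_norm]
    have h2 := norm_cauchyPowerSeries_le f 0 (r : ℝ) n
    have hcont : ContinuousOn (fun θ : ℝ => ‖f (circleMap 0 (r : ℝ) θ)‖) (Set.uIcc 0 (2 * Real.pi)) := by
      apply ContinuousOn.norm
      apply hd.continuousOn.comp (continuous_circleMap 0 (r : ℝ)).continuousOn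
      intro θ _
      rw [Metric.mem_closedBall, dist_zero_right]
      simp [norm_circleMap_zero, abs_of_nonneg r.coe_nonneg]
    have hInt : (∫ θ in (0:ℝ)..2 * Real.pi, ‖f (circleMap 0 (r : ℝ) θ)‖) ≤ 2 * Real.pi := by
      have hle : ∀ θ ∈ Set.Icc (0:ℝ) (2 * Real.pi), ‖f (circleMap 0 (r : ℝ) θ)‖ ≤ 1 := by
        intro θ _
        apply hb
        rw [Metric.mem_ball, dist_zero_right,
          norm_circleMap_zero, abs_of_nonneg r.coe_nonneg]
        exact hr1
      have := intervalIntegral.integral_mono_on (μ := MeasureTheory.volume)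
        (g := fun _ : ℝ => (1 : ℝ))
        (by positivity : (0:ℝ) ≤ 2 * Real.pi)
        (hcont.intervalIntegrable) intervalIntegrable_const hle
      simpa [mul_comm] using this
    have hπ : (0:ℝ) < 2 * Real.pi := by positivity
    have h3 : ‖A n‖ ≤ ((r : ℝ)⁻¹) ^ n := by
      rw [h1]
      refine h2.trans ?_
      rw [abs_of_nonneg r.coe_nonneg]
      have : (2 * Real.pi)⁻¹ * (∫ θ in (0:ℝ)..2 * Real.pi, ‖f (circleMap 0 (r : ℝ) θ)‖) ≤ 1 := by
        rw [inv_mul_le_iff₀ hπ]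
        linarith [hInt]
      calc (2 * Real.pi)⁻¹ * (∫ θ in (0:ℝ)..2 * Real.pi, ‖f (circleMap 0 (r : ℝ) θ)‖) * (r:ℝ)⁻¹ ^ n
          ≤ 1 * (r:ℝ)⁻¹ ^ n := by
            apply mul_le_mul_of_nonneg_right this (by positivity)
        _ = (r:ℝ)⁻¹ ^ n := one_mul _
    calc ‖A n‖ * (r:ℝ) ^ n ≤ (r:ℝ)⁻¹ ^ n * (r:ℝ) ^ n :=
          mul_le_mul_of_nonneg_right h3 (by positivity)
      _ = 1 := by
          rw [← mul_pow, inv_mul_cancel₀ (by exact_mod_cast hr0.ne' : (r:ℝ) ≠ 0), one_pow]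
  have hlim : Filter.Tendsto (fun t : ℝ => ‖A n‖ * t ^ n) (nhdsWithin 1 (Set.Iio 1))
      (nhds (‖A n‖ * 1 ^ n)) :=
    ((continuous_const.mul (continuous_pow n)).tendsto 1).mono_left nhdsWithin_le_nhds
  have hev : ∀ᶠ t : ℝ in nhdsWithin 1 (Set.Iio 1), ‖A n‖ * t ^ n ≤ 1 := by
    filter_upwards [Ioo_mem_nhdsLT_of_mem (by constructor <;> norm_num : (1:ℝ) ∈ Set.Ioc 0 1)]
      with t ht
    exact key ⟨t, ht.1.le⟩ (by exact_mod_cast ht.1) ht.2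
  have := le_of_tendsto hlim hev
  simpa using this

private lemma bohr_mem {m : ℕ} {ρ : ℝ} (h0 : 0 ≤ ρ) (h1 : ρ < 1) (hm : ρ ^ m ≤ 1 - ρ) :
    ρ ∈ bohrSetShift m := by
  refine ⟨h0, fun f A hsum hvan hb ρ' hρ'0 hρ'ρ => ?_⟩
  have hA : ∀ n, ‖A n‖ ≤ 1 := by
    apply bohr_coeff_le_one hsum
    intro z hz
    refine (hb z hz).trans (pow_le_one₀ (norm_nonneg z) ?_)
    rw [Metric.mem_ball, dist_zero_right] at hz
    exact hz.le
  have hρ'1 : ρ' < 1 := lt_of_le_of_lt hρ'ρ h1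
  have hgeom : Summable (fun n : ℕ => ρ' ^ n) := summable_geometric_of_lt_one hρ'0 hρ'1
  have hptle : ∀ n : ℕ, ‖A n‖ * ρ' ^ n ≤ ρ' ^ n := fun n =>
    mul_le_of_le_one_left (pow_nonneg hρ'0 n) (hA n)
  have hsummable : Summable (fun n : ℕ => ‖A n‖ * ρ' ^ n) :=
    Summable.of_nonneg_of_le (fun n => mul_nonneg (norm_nonneg _) (pow_nonneg hρ'0 n))
      hptle hgeom
  refine ⟨hsummable, ?_⟩
  have heq : ∑' n : ℕ, ‖A n‖ * ρ' ^ n = ∑' n : ℕ, ‖A (n + m)‖ * ρ' ^ (n + m) := by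
    rw [← Summable.sum_add_tsum_nat_add m hsummable, Finset.sum_eq_zero, zero_add]
    intro i hi
    rw [hvan i (Finset.mem_range.1 hi)]
    simp
  have hshift : Summable (fun n : ℕ => ‖A (n + m)‖ * ρ' ^ (n + m)) :=
    (summable_nat_add_iff m).2 hsummable
  have hgeomshift : Summable (fun n : ℕ => ρ' ^ (n + m)) := (summable_nat_add_iff m).2 hgeom
  have h1ρ' : 0 < 1 - ρ' := by linarith
  calc ∑' n : ℕ, ‖A n‖ * ρ' ^ n = ∑' n : ℕ, ‖A (n + m)‖ * ρ' ^ (n + m) := heq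
    _ ≤ ∑' n : ℕ, ρ' ^ (n + m) := Summable.tsum_le_tsum (fun n => hptle _) hshift hgeomshift
    _ = ρ' ^ m * (1 - ρ')⁻¹ := by
        simp_rw [pow_add]
        rw [tsum_mul_right, tsum_geometric_of_lt_one hρ'0 hρ'1]
        ring
    _ ≤ (1 - ρ') * (1 - ρ')⁻¹ := by
        apply mul_le_mul_of_nonneg_right ?_ (by positivity)
        calc ρ' ^ m ≤ ρ ^ m := pow_le_pow_left₀ hρ'0 hρ'ρ m
          _ ≤ 1 - ρ := hm
          _ ≤ 1 - ρ' := by linarith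
    _ = 1 := mul_inv_cancel₀ h1ρ'.ne'

private lemma bohr_subset_Iic (m : ℕ) : bohrSetShift m ⊆ Set.Iic 1 := by
  rintro r ⟨hr0, hr⟩
  set A : ℕ → ℂ := fun n => if n = m + 1 then 1 else 0 with hA
  have h := hr (fun z => z ^ (m + 1)) A ?_ ?_ ?_ r hr0 le_rfl
  · have hts : (fun n : ℕ => ‖A n‖ * r ^ n) = fun n : ℕ => if n = m + 1 then r ^ (m+1) else 0 := by
      funext n
      by_cases hn : n = m + 1 <;> simp [hA, hn]
    have h2 := h.2
    rw [hts, tsum_ite_eq] at h2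
    exact (pow_le_one_iff_of_nonneg hr0 (Nat.succ_ne_zero m)).1 h2
  · intro z hz
    have : (fun n : ℕ => A n * z ^ n) = fun n : ℕ => if n = m + 1 then z ^ (m+1) else 0 := by
      funext n
      by_cases hn : n = m + 1 <;> simp [hA, hn]
    rw [this]
    exact hasSum_ite_eq (m + 1) (z ^ (m + 1))
  · intro n hn
    simp [hA, Nat.ne_of_lt (hn.trans (Nat.lt_succ_self m))]
  · intro z hz
    rw [Metric.mem_ball, dist_zero_right] at hz
    rw [norm_pow]
    exact pow_le_pow_of_le_one (norm_nonneg z) hz.le (Nat.le_succ m)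

private lemma bohr_zero_mem (m : ℕ) : (0 : ℝ) ∈ bohrSetShift m := by
  refine ⟨le_rfl, fun f A hsum hvan hb ρ hρ0 hρ1 => ?_⟩
  have hρ : ρ = 0 := le_antisymm hρ1 hρ0
  subst hρ
  have hfun : (fun n : ℕ => ‖A n‖ * (0:ℝ) ^ n) = fun n : ℕ => if n = 0 then ‖A 0‖ else 0 := by
    funext n
    cases n <;> simp
  rw [hfun]
  refine ⟨(hasSum_ite_eq 0 ‖A 0‖).summable, ?_⟩
  rw [tsum_ite_eq]
  have h0 := hsum 0 (by simp)
  have h0' : HasSum (fun n : ℕ => A n * (0:ℂ) ^ n) (A 0) := by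
    have : (fun n : ℕ => A n * (0:ℂ) ^ n) = fun n : ℕ => if n = 0 then A 0 else 0 := by
      funext n
      cases n <;> simp
    rw [this]
    exact hasSum_ite_eq 0 (A 0)
  have hA0 : A 0 = f 0 := h0'.unique h0
  have hf0 := hb 0 (by simp)
  rw [hA0]
  refine hf0.trans ?_
  cases m <;> simp

theorem bohr_radius_shift_operator_tendsto_one :
    Filter.Tendsto (fun m : ℕ => sSup (bohrSetShift m)) Filter.atTop (nhds 1) := by
  rw [tendsto_order]
  constructor
  · intro a ha
    set ρ : ℝ := (max a 0 + 1) / 2 with hρdef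
    have hmax1 : max a 0 < 1 := max_lt ha one_pos
    have h0 : 0 ≤ ρ := by
      have : (0:ℝ) ≤ max a 0 := le_max_right a 0
      rw [hρdef]; linarith
    have haρ : a < ρ := by
      have : a ≤ max a 0 := le_max_left a 0
      rw [hρdef]; linarith
    have hρ1 : ρ < 1 := by rw [hρdef]; linarith
    have hev : ∀ᶠ m : ℕ in Filter.atTop, ρ ^ m < 1 - ρ :=
      (tendsto_pow_atTop_nhds_zero_of_lt_one h0 hρ1).eventually_lt_const (by linarith)
    filter_upwards [hev] with m hm
    have hmem := bohr_mem h0 hρ1 hm.le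
    exact lt_of_lt_of_le haρ (le_csSup ⟨1, fun x hx => bohr_subset_Iic m hx⟩ hmem)
  · intro a ha
    filter_upwards with m
    exact lt_of_le_of_lt
      (csSup_le ⟨0, bohr_zero_mem m⟩ (fun x hx => bohr_subset_Iic m hx)) ha
end

section
/- For each m ∈ ℕ let R′_m := sup { r ∈ [0, ∞) : for every function f(z) = ∑_{n≥m} a_n zⁿ analytic on 𝔻 satisfying sup_{z∈𝔻} |f^{(m)}(z)| ≤ 1, and for every ρ ∈ [0, r], the series ∑_{n≥m} |a_n| ρⁿ converges and is ≤ 1 }. Then R′_m → 1 as m → ∞. (This is the statement that the Bohr radius R_{∂^m → id} of the pair (m-th derivative operator, identity) tends to 1.) -/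
open Metric Filter

/-- The set of admissible Bohr radii for the pair `(∂^m, id)`: nonnegative `r`
such that for every `f(z) = ∑_{n≥m} aₙ zⁿ` analytic on the unit disk with
`sup_{z∈𝔻} |f^{(m)}(z)| ≤ 1`, the majorant series at every `ρ ∈ [0,r]` converges
and is `≤ 1`. -/
def bohrSetDeriv (m : ℕ) : Set ℝ :=
  {r | 0 ≤ r ∧ ∀ (f : ℂ → ℂ) (A : ℕ → ℂ),
      (∀ z ∈ Metric.ball (0 : ℂ) 1, HasSum (fun n : ℕ => A n * z ^ n) (f z)) →
      (∀ n, n < m → A n = 0) →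
      (∀ z ∈ Metric.ball (0 : ℂ) 1, ‖iteratedDeriv m f z‖ ≤ 1) →
      ∀ ρ : ℝ, 0 ≤ ρ → ρ ≤ r →
        Summable (fun n : ℕ => ‖A n‖ * ρ ^ n) ∧ ∑' n : ℕ, ‖A n‖ * ρ ^ n ≤ 1}

namespace BohrAux

open Nat Complex Set
open scoped NNReal ENNReal Topology

lemma iteratedDeriv_add_eq (f : ℂ → ℂ) (m k : ℕ) :
    iteratedDeriv (k + m) f = iteratedDeriv k (iteratedDeriv m f) := by
  induction k with
  | zero => simp
  | succ k ih =>
    rw [Nat.succ_add, iteratedDeriv_succ, ih, ← iteratedDeriv_succ]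

lemma iteratedDeriv_const_mul_pow (c : ℂ) (N j : ℕ) :
    iteratedDeriv j (fun z : ℂ => c * z ^ N) =
      fun z => c * ((N.descFactorial j : ℂ) * z ^ (N - j)) := by
  induction j with
  | zero => simp
  | succ j ih =>
    rw [iteratedDeriv_succ, ih]
    funext z
    rw [deriv_const_mul _ ((differentiableAt_pow _).const_mul _),
      deriv_const_mul _ (differentiableAt_pow _), deriv_pow_field]
    rw [Nat.descFactorial_succ, Nat.sub_sub]
    push_cast
    ring

lemma mem_bohrSetDeriv (m : ℕ) (hm : 1 ≤ m) : (1 - 1/(m:ℝ)) ∈ bohrSetDeriv m := by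
  have hm0 : (0:ℝ) < m := by exact_mod_cast hm
  have hinv : 1/(m:ℝ) ≤ 1 := by
    rw [div_le_one hm0]; exact_mod_cast hm
  refine ⟨by linarith, ?_⟩
  intro f A hsum hvan hbound ρ hρ0 hρr
  have hρ1 : ρ < 1 := lt_of_le_of_lt hρr (by
    have : 0 < 1/(m:ℝ) := by positivity
    linarith)
  -- the power series of f
  set p := FormalMultilinearSeries.ofScalars ℂ A with hp_def
  have hpn : ∀ n, ‖p n‖ = ‖A n‖ := fun n => FormalMultilinearSeries.ofScalars_norm _ _ _
  have hradius : 1 ≤ p.radius := by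
    refine ENNReal.le_of_forall_nnreal_lt fun r hr => ?_
    have hr1 : (r:ℝ) < 1 := by exact_mod_cast hr
    have hmem : ((r:ℝ):ℂ) ∈ Metric.ball (0:ℂ) 1 := by
      rw [mem_ball_zero_iff, Complex.norm_real, Real.norm_eq_abs,
        _root_.abs_of_nonneg r.coe_nonneg]
      exact hr1
    have h0 := tendsto_zero_iff_norm_tendsto_zero.mp (hsum _ hmem).summable.tendsto_atTop_zero
    refine p.le_radius_of_tendsto (l := 0) ?_
    convert h0 using 2 with n
    rw [hpn, norm_mul, norm_pow, Complex.norm_real, Real.norm_eq_abs,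
      _root_.abs_of_nonneg r.coe_nonneg]
  have hp : HasFPowerSeriesOnBall f p 0 1 := by
    refine ⟨hradius, one_pos, fun {y} hy => ?_⟩
    have hy' : y ∈ Metric.ball (0:ℂ) 1 := by
      rw [mem_emetric_ball_zero_iff] at hy
      rw [mem_ball_zero_iff, ← coe_nnnorm]
      exact_mod_cast ENNReal.coe_lt_one_iff.mp hy
    have := hsum y hy'
    rw [zero_add]
    convert this using 1
    · rfl
    funext n
    rw [hp_def, FormalMultilinearSeries.ofScalars_apply_eq, smul_eq_mul]
  have hAn : ∀ n, (n ! : ℂ) * A n = iteratedDeriv n f 0 := by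
    intro n
    have h := hp.factorial_smul (1:ℂ) n
    rw [hp_def, FormalMultilinearSeries.ofScalars_apply_eq, smul_eq_mul, one_pow,
      mul_one] at h
    rw [iteratedDeriv_eq_iteratedFDeriv, ← h, nsmul_eq_mul]
  have hball : Metric.eball (0:ℂ) 1 = Metric.ball (0:ℂ) 1 := by
    rw [← ENNReal.coe_one, Metric.emetric_ball_nnreal]
    simp
  have hfan : AnalyticOnNhd ℂ f (Metric.ball (0:ℂ) 1) := hball ▸ hp.analyticOnNhd
  have hgan : ∀ j, AnalyticOnNhd ℂ (iteratedDeriv j f) (Metric.ball (0:ℂ) 1) := by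
    intro j
    induction j with
    | zero => simpa using hfan
    | succ j ih => rw [iteratedDeriv_succ]; exact ih.deriv
  set g := iteratedDeriv m f with hg_def
  -- coefficient bound
  have key : ∀ n, m ≤ n → ‖A n‖ ≤ ((n - m)! : ℝ) / n ! := by
    intro n hn
    set k := n - m with hk
    have hkm : k + m = n := Nat.sub_add_cancel hn
    have step : ∀ r : ℝ, r ∈ Set.Ioo (0:ℝ) 1 → ‖A n‖ * r ^ k ≤ (k ! : ℝ) / n ! := by
      intro r hr
      lift r to ℝ≥0 using hr.1.le with r'
      have hr0 : 0 < r' := by exact_mod_cast hr.1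
      have hr1 : (r' : ℝ) < 1 := hr.2
      have hsub : Metric.ball (0:ℂ) r' ⊆ Metric.ball (0:ℂ) 1 :=
        Metric.ball_subset_ball (le_of_lt hr1)
      have hgd : DiffContOnCl ℂ g (Metric.ball (0:ℂ) r') := by
        refine ⟨((hgan m).differentiableOn).mono hsub, ?_⟩
        refine ((hgan m).continuousOn).mono ?_
        exact closure_ball_subset_closedBall.trans (Metric.closedBall_subset_ball hr1)
      have hq : HasFPowerSeriesOnBall g (cauchyPowerSeries g 0 r') 0 r' :=
        hgd.hasFPowerSeriesOnBall hr0
      set q := cauchyPowerSeries g 0 (r' : ℝ) with hq_def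
      -- identify coefficients
      have hqk : (k ! : ℂ) * (q k fun _ => (1:ℂ)) = (n ! : ℂ) * A n := by
        have h := hq.factorial_smul (1:ℂ) k
        rw [nsmul_eq_mul] at h
        rw [h, ← iteratedDeriv_eq_iteratedFDeriv]
        show iteratedDeriv k (iteratedDeriv m f) 0 = _
        rw [← iteratedDeriv_add_eq, hkm]
        exact (hAn n).symm
      -- norm bound on q k
      have hIb : (2 * Real.pi)⁻¹ * (∫ θ : ℝ in (0)..2 * Real.pi,
          ‖g (circleMap 0 (r':ℝ) θ)‖) ≤ 1 := by
        have hgc : ContinuousOn g (Metric.ball (0:ℂ) 1) := (hgan m).continuousOn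
        have hmemS : ∀ θ : ℝ, circleMap 0 (r':ℝ) θ ∈ Metric.ball (0:ℂ) 1 := by
          intro θ
          rw [mem_ball_zero_iff, norm_circleMap_zero,
            _root_.abs_of_nonneg r'.coe_nonneg]
          exact hr1
        have hcont : Continuous fun θ : ℝ => ‖g (circleMap 0 (r':ℝ) θ)‖ := by
          refine Continuous.norm ?_
          refine ContinuousOn.comp_continuous hgc (continuous_circleMap _ _) hmemS
        have hint1 : IntervalIntegrable (fun θ : ℝ => ‖g (circleMap 0 (r':ℝ) θ)‖)
            MeasureTheory.volume 0 (2 * Real.pi) := hcont.intervalIntegrable _ _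
        have hle : (∫ θ : ℝ in (0)..2 * Real.pi, ‖g (circleMap 0 (r':ℝ) θ)‖) ≤
            ∫ _ : ℝ in (0)..2 * Real.pi, (1:ℝ) := by
          refine intervalIntegral.integral_mono_on Real.two_pi_pos.le hint1
            intervalIntegrable_const ?_
          intro θ _
          exact hbound _ (hmemS θ)
        have h2π : (∫ _ : ℝ in (0)..2 * Real.pi, (1:ℝ)) = 2 * Real.pi := by simp
        rw [h2π] at hle
        calc (2 * Real.pi)⁻¹ * (∫ θ : ℝ in (0)..2 * Real.pi, ‖g (circleMap 0 (r':ℝ) θ)‖)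
            ≤ (2 * Real.pi)⁻¹ * (2 * Real.pi) := by
              refine mul_le_mul_of_nonneg_left hle (by positivity)
          _ = 1 := by
              field_simp
      have hqnorm : ‖q k fun _ => (1:ℂ)‖ ≤ ((r':ℝ))⁻¹ ^ k := by
        calc ‖q k fun _ => (1:ℂ)‖ ≤ ‖q k‖ * ∏ _i : Fin k, ‖(1:ℂ)‖ :=
              ContinuousMultilinearMap.le_opNorm _ _
          _ = ‖q k‖ := by simp
          _ ≤ ((2 * Real.pi)⁻¹ * ∫ θ : ℝ in (0)..2 * Real.pi,
                ‖g (circleMap 0 (r':ℝ) θ)‖) * |(r':ℝ)|⁻¹ ^ k :=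
              norm_cauchyPowerSeries_le _ _ _ _
          _ ≤ 1 * ((r':ℝ))⁻¹ ^ k := by
              rw [_root_.abs_of_nonneg r'.coe_nonneg]
              refine mul_le_mul_of_nonneg_right hIb (by positivity)
          _ = ((r':ℝ))⁻¹ ^ k := one_mul _
      -- combine
      have hfacpos : (0:ℝ) < n ! := by exact_mod_cast n.factorial_pos
      have heq : (n ! : ℝ) * ‖A n‖ = (k ! : ℝ) * ‖q k fun _ => (1:ℂ)‖ := by
        have := congrArg norm hqk
        rw [norm_mul, norm_mul, Complex.norm_natCast, Complex.norm_natCast] at this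
        linarith [this]
      have hrpos : (0:ℝ) < (r':ℝ) := hr.1
      have : (n ! : ℝ) * (‖A n‖ * (r':ℝ) ^ k) ≤ (k ! : ℝ) := by
        calc (n ! : ℝ) * (‖A n‖ * (r':ℝ) ^ k) = ((n ! : ℝ) * ‖A n‖) * (r':ℝ) ^ k := by ring
          _ = ((k ! : ℝ) * ‖q k fun _ => (1:ℂ)‖) * (r':ℝ) ^ k := by rw [heq]
          _ ≤ ((k ! : ℝ) * ((r':ℝ))⁻¹ ^ k) * (r':ℝ) ^ k := by
              refine mul_le_mul_of_nonneg_right (mul_le_mul_of_nonneg_left hqnorm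
                (by positivity)) (by positivity)
          _ = (k ! : ℝ) := by
              rw [mul_assoc, ← mul_pow, inv_mul_cancel₀ (ne_of_gt hrpos)]
              simp
      rw [le_div_iff₀ hfacpos]
      linarith
    -- take the limit r → 1⁻
    have hlim : Tendsto (fun r : ℝ => ‖A n‖ * r ^ k) (nhdsWithin 1 (Set.Iio 1))
        (nhds (‖A n‖ * 1 ^ k)) :=
      ((continuous_const.mul (continuous_pow k)).tendsto 1).mono_left nhdsWithin_le_nhds
    have hle := le_of_tendsto hlim (by
      filter_upwards [Ioo_mem_nhdsLT (by norm_num : (0:ℝ) < 1)] with r hr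
      exact step r hr)
    simpa using hle
  -- termwise bound
  have hmfacpos : (0:ℝ) < (m ! : ℝ) := by exact_mod_cast m.factorial_pos
  have hterm : ∀ n, ‖A n‖ * ρ ^ n ≤ (1 / (m ! : ℝ)) * ρ ^ n := by
    intro n
    rcases lt_or_ge n m with h | h
    · rw [hvan n h]
      simp only [norm_zero, zero_mul]
      positivity
    · have h1 : ‖A n‖ ≤ 1 / (m ! : ℝ) := by
        refine (key n h).trans ?_
        have hnfacpos : (0:ℝ) < (n ! : ℝ) := by exact_mod_cast n.factorial_pos
        have hdvd := Nat.factorial_mul_factorial_dvd_factorial_add (n - m) m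
        rw [Nat.sub_add_cancel h] at hdvd
        have hle : ((n-m)! * m ! : ℕ) ≤ n ! := Nat.le_of_dvd n.factorial_pos hdvd
        rw [div_le_div_iff₀ hnfacpos hmfacpos, one_mul]
        exact_mod_cast hle
      exact mul_le_mul_of_nonneg_right h1 (by positivity)
  have hsummable : Summable (fun n : ℕ => (1 / (m ! : ℝ)) * ρ ^ n) :=
    (summable_geometric_of_lt_one hρ0 hρ1).mul_left _
  have hAsummable : Summable (fun n : ℕ => ‖A n‖ * ρ ^ n) := by
    refine Summable.of_nonneg_of_le (fun n => by positivity) hterm hsummable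
  refine ⟨hAsummable, ?_⟩
  have htsum : ∑' n : ℕ, ‖A n‖ * ρ ^ n ≤ ∑' n : ℕ, (1 / (m ! : ℝ)) * ρ ^ n :=
    Summable.tsum_le_tsum hterm hAsummable hsummable
  have hgeom : ∑' n : ℕ, (1 / (m ! : ℝ)) * ρ ^ n = (1 / (m ! : ℝ)) * (1 - ρ)⁻¹ := by
    rw [tsum_mul_left, tsum_geometric_of_lt_one hρ0 hρ1]
  have hfinal : (1 / (m ! : ℝ)) * (1 - ρ)⁻¹ ≤ 1 := by
    have h1ρ : 1/(m:ℝ) ≤ 1 - ρ := by linarith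
    have h1ρpos : (0:ℝ) < 1 - ρ := by
      have : (0:ℝ) < 1/(m:ℝ) := by positivity
      linarith
    have hinv2 : (1 - ρ)⁻¹ ≤ (m:ℝ) := by
      rw [← one_div]
      rw [div_le_iff₀ h1ρpos]
      rw [div_le_iff₀ hm0] at h1ρ
      linarith
    calc (1 / (m ! : ℝ)) * (1 - ρ)⁻¹ ≤ (1 / (m ! : ℝ)) * (m:ℝ) := by
          refine mul_le_mul_of_nonneg_left hinv2 (by positivity)
      _ ≤ 1 := by
          rw [div_mul_eq_mul_div, one_mul, div_le_one hmfacpos]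
          exact_mod_cast m.self_le_factorial
  calc ∑' n : ℕ, ‖A n‖ * ρ ^ n ≤ (1 / (m ! : ℝ)) * (1 - ρ)⁻¹ := by rw [← hgeom]; exact htsum
    _ ≤ 1 := hfinal

lemma bohr_le_one (m : ℕ) : ∀ r ∈ bohrSetDeriv m, r ≤ 1 := by
  intro r hr
  by_contra hlt
  push_neg at hlt
  obtain ⟨hr0, H⟩ := hr
  have hrpos : (0:ℝ) < r := lt_trans one_pos hlt
  have hinv : ‖r⁻¹‖ < 1 := by
    rw [Real.norm_eq_abs, _root_.abs_of_pos (by positivity)]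
    rw [inv_lt_one_iff₀]; right; exact hlt
  have h0 : Tendsto (fun N : ℕ => ‖(N:ℝ)^m * r⁻¹^N‖) atTop (nhds 0) :=
    (summable_norm_pow_mul_geometric_of_norm_lt_one m hinv).tendsto_atTop_zero
  have hev : ∀ᶠ N : ℕ in atTop, ‖(N:ℝ)^m * r⁻¹^N‖ < 1 :=
    h0.eventually_lt_const one_pos
  obtain ⟨N, hNm, hN1⟩ := ((eventually_ge_atTop m).and hev).exists
  set k := N - m with hk
  have hkm : k + m = N := Nat.sub_add_cancel hNm
  have hNfacpos : (0:ℝ) < (N ! : ℝ) := by exact_mod_cast N.factorial_pos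
  have hkfacpos : (0:ℝ) < (k ! : ℝ) := by exact_mod_cast k.factorial_pos
  -- r ^ N > N ^ m
  have hrN : (N:ℝ)^m < r ^ N := by
    have hterm : (N:ℝ)^m * r⁻¹^N < 1 := by
      have := hN1
      rwa [Real.norm_eq_abs, _root_.abs_of_nonneg (by positivity)] at this
    have hrNpos : (0:ℝ) < r ^ N := by positivity
    rw [inv_pow] at hterm
    calc (N:ℝ)^m = ((N:ℝ)^m * (r^N)⁻¹) * r^N := by field_simp
      _ < 1 * r^N := by exact mul_lt_mul_of_pos_right hterm hrNpos
      _ = r^N := one_mul _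
  set c : ℂ := (k ! : ℂ) / (N ! : ℂ) with hc
  have hdesc : (k ! : ℂ) * (N.descFactorial m : ℂ) = (N ! : ℂ) := by
    have := Nat.factorial_mul_descFactorial hNm
    rw [hk]
    exact_mod_cast congrArg (Nat.cast : ℕ → ℂ) this
  have hcd : c * (N.descFactorial m : ℂ) = 1 := by
    rw [hc, div_mul_eq_mul_div, hdesc, div_self (by exact_mod_cast N.factorial_pos.ne')]
  have key := H (fun z => c * z ^ N) (fun n => if n = N then c else 0)
    (by
      intro z hz
      have h := hasSum_ite_eq N (c * z ^ N)
      convert h using 1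
      funext n
      by_cases hn : n = N
      · subst hn; simp
      · simp [hn])
    (by
      intro n hn
      have : n ≠ N := by omega
      simp [this])
    (by
      intro z hz
      rw [iteratedDeriv_const_mul_pow]
      show ‖c * ((N.descFactorial m : ℂ) * z ^ (N - m))‖ ≤ 1
      rw [← mul_assoc, hcd, one_mul]
      rw [mem_ball_zero_iff] at hz
      rw [norm_pow]
      exact pow_le_one₀ (norm_nonneg _) hz.le)
    r hr0 le_rfl
  obtain ⟨-, hts⟩ := key
  have htsum : (∑' n : ℕ, ‖if n = N then c else 0‖ * r ^ n) = ‖c‖ * r ^ N := by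
    have heqf : (fun n : ℕ => ‖if n = N then c else 0‖ * r ^ n) =
        fun n : ℕ => if n = N then ‖c‖ * r ^ N else 0 := by
      funext n
      by_cases hn : n = N
      · subst hn; simp
      · simp [hn]
    rw [heqf, tsum_ite_eq]
  rw [htsum] at hts
  have hcnorm : ‖c‖ = (k ! : ℝ) / (N ! : ℝ) := by
    rw [hc, norm_div, Complex.norm_natCast, Complex.norm_natCast]
  rw [hcnorm] at hts
  -- contradiction
  have hdescR : ((N.descFactorial m : ℕ) : ℝ) ≤ (N:ℝ)^m := by
    exact_mod_cast Nat.descFactorial_le_pow N m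
  have hdescR2 : (k ! : ℝ) * ((N.descFactorial m : ℕ) : ℝ) = (N ! : ℝ) := by
    have := Nat.factorial_mul_descFactorial hNm
    rw [hk]
    exact_mod_cast congrArg (Nat.cast : ℕ → ℝ) this
  have h1lt : 1 < (k ! : ℝ) / (N ! : ℝ) * r ^ N := by
    rw [div_mul_eq_mul_div, lt_div_iff₀ hNfacpos, one_mul, ← hdescR2]
    refine mul_lt_mul_of_pos_left (lt_of_le_of_lt hdescR hrN) hkfacpos
  linarith

end BohrAux

theorem bohr_radius_mth_derivative_tendsto_one :
    Filter.Tendsto (fun m : ℕ => sSup (bohrSetDeriv m)) Filter.atTop (nhds 1) := by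
  have h1 : Tendsto (fun m : ℕ => 1 - 1/(m:ℝ)) atTop (nhds 1) := by
    have := tendsto_const_nhds (x := (1:ℝ)) (f := atTop (α := ℕ))
    simpa using this.sub tendsto_one_div_atTop_nhds_zero_nat
  refine tendsto_of_tendsto_of_tendsto_of_le_of_le' h1 tendsto_const_nhds ?_ ?_
  · filter_upwards [eventually_ge_atTop 1] with m hm
    exact le_csSup ⟨1, fun x hx => BohrAux.bohr_le_one m x hx⟩ (BohrAux.mem_bohrSetDeriv m hm)
  · filter_upwards [eventually_ge_atTop 1] with m hm
    exact csSup_le ⟨_, BohrAux.mem_bohrSetDeriv m hm⟩ (BohrAux.bohr_le_one m)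
end

section
/- Let m ∈ ℕ and let c_n ∈ ℂ (n ≥ m) satisfy 0 < |c_m| and |c_n| ≤ |c_{n+1}| for all n ≥ m; let T denote the operator T f(z) := ∑_{n≥m} c_n a_n z^{n−m} for f(z) = ∑_{n≥m} a_n zⁿ. Let r ≥ 0 be such that for every F(z) = ∑_{n≥m} F_n zⁿ for which T F := ∑_{n≥m} c_n F_n z^{n−m} converges on 𝔻 and satisfies sup_{z∈𝔻} |T F(z)| ≤ 1, one has ∑_{n≥m} |F_n| ρⁿ ≤ 1 for all ρ ∈ [0, r]. Suppose f(z) = ∑_{n≥m} a_n zⁿ and g(z) = ∑_{n≥m} b_n zⁿ are such that T f and T g are analytic on 𝔻 and T f is subordinate to T g, i.e. there exists an analytic ω : 𝔻 → 𝔻 with ω(0) = 0 and T f(z) = (T g)(ω(z)) for all z ∈ 𝔻. Then ∑_{n≥m} |a_n| rⁿ ≤ ∑_{n≥m} |c_n b_n| r^{n−m}, i.e. M_r f ≤ M_r(T g). -/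
open Metric Filter
open scoped NNReal ENNReal



open FormalMultilinearSeries in
private lemma aux_hasFPowerSeriesAt {f : ℂ → ℂ} {C : ℕ → ℂ} {s : ℝ} (hs : 0 < s)
    (hC : ∀ z : ℂ, ‖z‖ < s → HasSum (fun n => C n * z ^ n) (f z)) :
    HasFPowerSeriesAt f (ofScalars ℂ C) 0 := by
  have hs2 : (0 : ℝ) < s / 2 := by linarith
  set s' : NNReal := ⟨s / 2, hs2.le⟩ with hs'def
  have hs's : (s' : ℝ) < s := by
    show s / 2 < s; linarith
  have hnorm : ‖((s' : ℝ) : ℂ)‖ < s := by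
    rw [Complex.norm_real, Real.norm_eq_abs, NNReal.abs_eq]
    exact hs's
  have h0 := hC _ hnorm
  have hrad : (s' : ENNReal) ≤ (ofScalars ℂ C).radius := by
    apply le_radius_of_tendsto _ (l := 0)
    have h1 : Filter.Tendsto (fun n => ‖C n * ((s' : ℝ) : ℂ) ^ n‖) atTop (nhds 0) := by
      simpa using h0.summable.tendsto_atTop_zero.norm
    convert h1 using 2 with n
    rw [ofScalars_norm, norm_mul, norm_pow, Complex.norm_real, Real.norm_eq_abs, NNReal.abs_eq]
  refine ⟨(s' : ENNReal), hrad, ?_, ?_⟩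
  · exact ENNReal.coe_pos.mpr (by exact_mod_cast hs2)
  · intro y hy
    rw [zero_add]
    rw [mem_emetric_ball_zero_iff] at hy
    have hy' : ‖y‖ < (s' : ℝ) := by exact_mod_cast hy
    have := hC y (hy'.trans hs's)
    simp only [ofScalars_apply_eq, smul_eq_mul]
    exact this

private lemma aux_coeff_unique {f : ℂ → ℂ} {A B : ℕ → ℂ} {s : ℝ} (hs : 0 < s)
    (hA : ∀ z : ℂ, ‖z‖ < s → HasSum (fun n => A n * z ^ n) (f z))
    (hB : ∀ z : ℂ, ‖z‖ < s → HasSum (fun n => B n * z ^ n) (f z)) : A = B :=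
  FormalMultilinearSeries.ofScalars_series_injective ℂ ℂ
    ((aux_hasFPowerSeriesAt hs hA).eq_formalMultilinearSeries (aux_hasFPowerSeriesAt hs hB))


private lemma aux_regroup (T : ℕ → ℕ → ℝ≥0∞) :
    ∑' n : ℕ, ∑ k ∈ Finset.range (n + 1), T k (n - k) = ∑' k : ℕ, ∑' l : ℕ, T k l := by
  calc ∑' n : ℕ, ∑ k ∈ Finset.range (n + 1), T k (n - k)
      = ∑' (n : ℕ) (x : (Finset.HasAntidiagonal.antidiagonal n : Finset (ℕ × ℕ))),
        T (x : ℕ × ℕ).1 (x : ℕ × ℕ).2 := by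
        refine tsum_congr fun n => ?_
        rw [tsum_fintype, Finset.sum_coe_sort (Finset.HasAntidiagonal.antidiagonal n)
          (fun p => T p.1 p.2), Finset.Nat.sum_antidiagonal_eq_sum_range_succ_mk]
    _ = ∑' (x : Σ n : ℕ, (Finset.HasAntidiagonal.antidiagonal n : Finset (ℕ × ℕ))),
        T (x.2 : ℕ × ℕ).1 (x.2 : ℕ × ℕ).2 :=
        (ENNReal.tsum_sigma' (fun x : Σ n : ℕ, (Finset.HasAntidiagonal.antidiagonal n : Finset (ℕ × ℕ)) =>
          T (x.2 : ℕ × ℕ).1 (x.2 : ℕ × ℕ).2)).symm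
    _ = ∑' p : ℕ × ℕ, T p.1 p.2 := by
        rw [← Finset.HasAntidiagonal.sigmaAntidiagonalEquivProd.tsum_eq (fun p : ℕ × ℕ => T p.1 p.2)]
        rfl
    _ = ∑' k : ℕ, ∑' l : ℕ, T k l := ENNReal.tsum_prod

private lemma aux_shift (m : ℕ) (f : ℕ → ℝ≥0∞) (hf : ∀ n, n < m → f n = 0) :
    ∑' n : ℕ, f n = ∑' j : ℕ, f (j + m) := by
  apply tsum_eq_tsum_of_ne_zero_bij (fun x => x.val + m)
  · intro x y h
    simp only at h
    exact Subtype.ext (Nat.add_right_cancel h)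
  · intro n hn
    rw [Function.mem_support] at hn
    have hnm : m ≤ n := by
      by_contra h
      exact hn (hf n (by omega))
    refine ⟨⟨n - m, ?_⟩, ?_⟩
    · rw [Function.mem_support, Nat.sub_add_cancel hnm]
      exact hn
    · show n - m + m = n
      omega
  · intro x
    rfl


private lemma aux_exists_coeffs {f : ℂ → ℂ} (hd : DifferentiableOn ℂ f (ball (0:ℂ) 1))
    (hb : ∀ z ∈ ball (0:ℂ) 1, ‖f z‖ ≤ 1) :
    ∃ Q : ℕ → ℂ, (∀ z ∈ ball (0:ℂ) 1, HasSum (fun n => Q n * z ^ n) (f z)) ∧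
      ∀ n, ‖Q n‖ ≤ (4 / 3 : ℝ) ^ n := by
  have hball : ∀ t : ℝ≥0, (t : ℝ) < 1 →  0 < t →
      HasFPowerSeriesOnBall f (cauchyPowerSeries f 0 t) 0 t := by
    intro t h1 h0
    exact (hd.mono (closedBall_subset_ball h1)).hasFPowerSeriesOnBall h0
  set R : ℝ≥0 := 3/4 with hRdef
  have hR1 : (R : ℝ) < 1 := by norm_num [hRdef]
  have hR0 : 0 < R := by norm_num [hRdef]
  have hRr : (R : ℝ) = 3/4 := by norm_num [hRdef]
  set p := cauchyPowerSeries f 0 (R : ℝ) with hpdef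
  have h34 : HasFPowerSeriesOnBall f p 0 R := hball R hR1 hR0
  refine ⟨fun n => p.coeff n, ?_, ?_⟩
  · intro z hz
    rw [mem_ball_zero_iff] at hz
    set t : ℝ≥0 := ⟨(‖z‖ + 1) / 2, by positivity⟩ with htdef
    have hzt : ‖z‖ < (t : ℝ) := by show ‖z‖ < (‖z‖ + 1) / 2; linarith
    have ht1 : (t : ℝ) < 1 := by show (‖z‖ + 1) / 2 < 1; linarith
    have ht0 : 0 < t := by
      rw [← NNReal.coe_pos]
      exact lt_of_le_of_lt (norm_nonneg z) hzt
    have ht := hball t ht1 ht0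
    have hdone := (h34.exchange_radius ht).hasSum (y := z)
      (by rw [mem_emetric_ball_zero_iff]; exact_mod_cast hzt)
    rw [zero_add] at hdone
    have heq : (fun n => p n fun _ => z) = fun n => p.coeff n * z ^ n := by
      funext n
      rw [FormalMultilinearSeries.apply_eq_pow_smul_coeff, smul_eq_mul, mul_comm]
    rwa [heq] at hdone
  · intro n
    have h1 : ‖p.coeff n‖ ≤ ‖p n‖ := by
      have h := (p n).le_opNorm (fun _ => 1)
      simp only [norm_one, Finset.prod_const_one, mul_one] at h
      exact h
    have h2 := norm_cauchyPowerSeries_le f 0 (R : ℝ) n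
    have hcm : ∀ θ : ℝ, circleMap 0 (R : ℝ) θ ∈ ball (0:ℂ) 1 := by
      intro θ
      rw [mem_ball_zero_iff, norm_circleMap_zero]
      rw [hRr]; rw [abs_of_nonneg]; norm_num; norm_num
    have hcont : ContinuousOn (fun θ : ℝ => ‖f (circleMap 0 (R : ℝ) θ)‖)
        (Set.uIcc 0 (2 * Real.pi)) := by
      apply ContinuousOn.norm
      apply hd.continuousOn.comp (continuous_circleMap 0 (R : ℝ)).continuousOn
      intro θ _
      exact hcm θ
    have h3 : (∫ θ : ℝ in (0)..2 * Real.pi, ‖f (circleMap 0 (R : ℝ) θ)‖) ≤ 2 * Real.pi := by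
      have := intervalIntegral.integral_mono_on (μ := MeasureTheory.volume) (by positivity : (0:ℝ) ≤ 2 * Real.pi)
        hcont.intervalIntegrable intervalIntegrable_const
        (fun θ _ => hb _ (hcm θ))
      rw [intervalIntegral.integral_const, smul_eq_mul, sub_zero, mul_one] at this
      exact this
    have h4 : ((2 * Real.pi)⁻¹ * ∫ θ : ℝ in (0)..2 * Real.pi,
        ‖f (circleMap 0 (R : ℝ) θ)‖) ≤ 1 := by
      rw [inv_mul_le_iff₀ (by positivity), mul_one]
      exact h3
    have h5 : |(R : ℝ)|⁻¹ ^ n = (4/3 : ℝ) ^ n := by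
      rw [hRr, abs_of_nonneg (by norm_num : (0:ℝ) ≤ 3/4),
        show ((3:ℝ)/4)⁻¹ = 4/3 by norm_num]
    calc ‖p.coeff n‖ ≤ ‖p n‖ := h1
      _ ≤ ((2 * Real.pi)⁻¹ * ∫ θ : ℝ in (0)..2 * Real.pi,
          ‖f (circleMap 0 (R : ℝ) θ)‖) * |(R : ℝ)|⁻¹ ^ n := h2
      _ ≤ 1 * (4/3 : ℝ) ^ n := by
          rw [h5]
          apply mul_le_mul_of_nonneg_right h4 (by positivity)
      _ = (4/3 : ℝ) ^ n := one_mul _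


set_option maxHeartbeats 1600000 in
theorem majorant_series_comparison_subordination
    (m : ℕ) (c : ℕ → ℂ) (hcm : 0 < ‖c m‖)
    (hmono : ∀ n, m ≤ n → ‖c n‖ ≤ ‖c (n + 1)‖)
    (r : ℝ) (hr0 : 0 ≤ r)
    (hbohr : ∀ (F : ℕ → ℂ) (G : ℂ → ℂ),
      (∀ n, n < m → F n = 0) →
      (∀ z ∈ Metric.ball (0 : ℂ) 1,
        HasSum (fun n : ℕ => c (n + m) * F (n + m) * z ^ n) (G z)) →
      (∀ z ∈ Metric.ball (0 : ℂ) 1, ‖G z‖ ≤ 1) →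
      ∀ ρ : ℝ, 0 ≤ ρ → ρ ≤ r →
        ∑' n : ℕ, ENNReal.ofReal (‖F n‖ * ρ ^ n) ≤ 1)
    (a b : ℕ → ℂ) (ha0 : ∀ n, n < m → a n = 0) (hb0 : ∀ n, n < m → b n = 0)
    (Tf Tg : ℂ → ℂ)
    (hTf : ∀ z ∈ Metric.ball (0 : ℂ) 1,
      HasSum (fun n : ℕ => c (n + m) * a (n + m) * z ^ n) (Tf z))
    (hTg : ∀ z ∈ Metric.ball (0 : ℂ) 1,
      HasSum (fun n : ℕ => c (n + m) * b (n + m) * z ^ n) (Tg z))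
    (ω : ℂ → ℂ) (hωa : AnalyticOnNhd ℂ ω (Metric.ball 0 1))
    (hωmap : ∀ z ∈ Metric.ball (0 : ℂ) 1, ω z ∈ Metric.ball (0 : ℂ) 1)
    (hω0 : ω 0 = 0)
    (hsub : ∀ z ∈ Metric.ball (0 : ℂ) 1, Tf z = Tg (ω z)) :
    ∑' n : ℕ, ENNReal.ofReal (‖a n‖ * r ^ n)
      ≤ ∑' n : ℕ, ENNReal.ofReal (‖c (n + m) * b (n + m)‖ * r ^ n) := by
  classical
  -- monotonicity facts for c
  have hmono' : ∀ j k : ℕ, ‖c (j + m)‖ ≤ ‖c (k + j + m)‖ := by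
    intro j k
    induction k with
    | zero => simp
    | succ k ih =>
      refine ih.trans ?_
      have h2 := hmono (k + j + m) (by omega)
      have h3 : k + j + m + 1 = k + 1 + j + m := by omega
      rwa [h3] at h2
  have hcpos : ∀ n : ℕ, 0 < ‖c (n + m)‖ := by
    intro n
    have := hmono' 0 n
    simp only [Nat.zero_add, Nat.add_zero] at this
    exact lt_of_lt_of_le hcm this
  have hcne : ∀ n : ℕ, c (n + m) ≠ 0 := fun n => norm_pos_iff.mp (hcpos n)
  -- the Schwarz quotient φ
  have hωd : DifferentiableOn ℂ ω (ball (0 : ℂ) 1) := hωa.differentiableOn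
  set φ : ℂ → ℂ := dslope ω 0 with hφdef
  have hφd : DifferentiableOn ℂ φ (ball (0 : ℂ) 1) :=
    (Complex.differentiableOn_dslope (isOpen_ball.mem_nhds (mem_ball_self one_pos))).2 hωd
  have hφb : ∀ z ∈ ball (0 : ℂ) 1, ‖φ z‖ ≤ 1 := by
    intro z hz
    have hmaps : Set.MapsTo ω (ball 0 1) (ball (ω 0) 1) := by
      rw [hω0]; exact fun w hw => hωmap w hw
    simpa using Complex.norm_dslope_le_div_of_mapsTo_ball hωd (hmaps.mono_right ball_subset_closedBall) hz
  have hωφ : ∀ z : ℂ, ω z = z * φ z := by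
    intro z
    have h := sub_smul_dslope ω 0 z
    rw [hω0, sub_zero, sub_zero, smul_eq_mul] at h
    exact h.symm
  -- coefficients of φ ^ k
  have hQex : ∀ k : ℕ, ∃ Q : ℕ → ℂ,
      (∀ z ∈ ball (0 : ℂ) 1, HasSum (fun n => Q n * z ^ n) (φ z ^ k)) ∧
      ∀ n, ‖Q n‖ ≤ (4 / 3 : ℝ) ^ n := by
    intro k
    exact aux_exists_coeffs (hφd.pow k)
      (fun z hz => by rw [norm_pow]; exact pow_le_one₀ (norm_nonneg _) (hφb z hz))
  choose Q hQsum hQb using hQex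
  -- Bohr-type bound for each k
  have hKle : ∀ k : ℕ, ∑' j : ℕ,
      ENNReal.ofReal (‖Q k j‖ / ‖c (j + m)‖ * r ^ (j + m)) ≤ 1 := by
    intro k
    set F : ℕ → ℂ := fun n => if n < m then 0 else Q k (n - m) / c n with hFdef
    have hFm : ∀ j : ℕ, F (j + m) = Q k j / c (j + m) := by
      intro j
      rw [hFdef]
      simp only [show ¬(j + m < m) by omega, if_false, Nat.add_sub_cancel]
    have hFn : ∀ n : ℕ, c (n + m) * F (n + m) = Q k n := by
      intro n
      rw [hFm n, mul_comm, div_mul_cancel₀ _ (hcne n)]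
    have hsum : ∀ z ∈ ball (0 : ℂ) 1,
        HasSum (fun n => c (n + m) * F (n + m) * z ^ n) (φ z ^ k) := by
      intro z hz
      have h := hQsum k z hz
      have heq : (fun n => c (n + m) * F (n + m) * z ^ n) = fun n => Q k n * z ^ n := by
        funext n; rw [hFn n]
      rwa [heq]
    have hble := hbohr F (fun z => φ z ^ k) (fun n hn => if_pos hn) hsum
      (fun z hz => by rw [norm_pow]; exact pow_le_one₀ (norm_nonneg _) (hφb z hz)) r hr0 le_rfl
    refine le_trans (le_trans (le_of_eq ?_) (ENNReal.tsum_comp_le_tsum_of_injective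
      (add_left_injective m)
      (fun n => ENNReal.ofReal (‖F n‖ * r ^ n)))) hble
    refine tsum_congr fun j => ?_
    rw [hFm j, norm_div]
  -- the coefficient identity
  set cb : ℕ → ℂ := fun k => c (k + m) * b (k + m) with hcbdef
  set d : ℕ → ℂ := fun n => ∑ k ∈ Finset.range (n + 1), cb k * Q k (n - k) with hddef
  obtain ⟨B, hBmem⟩ : BddAbove (Set.range fun k => ‖cb k * (1 / 2 : ℂ) ^ k‖) := by
    have hhalf : (1 / 2 : ℂ) ∈ ball (0 : ℂ) 1 := by
      rw [mem_ball_zero_iff]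
      norm_num
    have h := (hTg _ hhalf).summable.tendsto_atTop_zero.norm
    exact h.bddAbove_range
  have hcbB : ∀ k : ℕ, ‖cb k‖ ≤ B * 2 ^ k := by
    intro k
    have h1 : ‖cb k * (1 / 2 : ℂ) ^ k‖ ≤ B := hBmem ⟨k, rfl⟩
    rw [norm_mul, norm_pow] at h1
    have h2 : ‖(1 / 2 : ℂ)‖ = 1 / 2 := by norm_num
    rw [h2] at h1
    have h3 : (0:ℝ) < (1 / 2) ^ k := by positivity
    calc ‖cb k‖ = ‖cb k‖ * (1 / 2) ^ k * 2 ^ k := by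
          rw [mul_assoc, ← mul_pow]
          norm_num
      _ ≤ B * 2 ^ k := by gcongr
  have hB0 : 0 ≤ B := le_trans (norm_nonneg _) (hBmem ⟨0, rfl⟩)
  have hAd : (fun n => c (n + m) * a (n + m)) = d := by
    apply aux_coeff_unique (f := Tf) (s := 1 / 8) (by norm_num)
    · intro z hz
      have hz1 : z ∈ ball (0 : ℂ) 1 := by
        rw [mem_ball_zero_iff]
        linarith
      exact hTf z hz1
    · intro z hz
      have hz1 : z ∈ ball (0 : ℂ) 1 := by
        rw [mem_ball_zero_iff]
        linarith
      have hωz : ω z ∈ ball (0 : ℂ) 1 := hωmap z hz1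
      set e : ℕ × ℕ → ℂ := fun p => cb p.1 * Q p.1 p.2 * z ^ (p.1 + p.2) with hedef
      have hte : Summable e := by
        apply Summable.of_norm_bounded
          (g := fun p : ℕ × ℕ => (B * (1 / 4 : ℝ) ^ p.1) * (1 / 6 : ℝ) ^ p.2)
        · apply Summable.mul_of_nonneg (f := fun k : ℕ => B * (1 / 4 : ℝ) ^ k)
            (g := fun l : ℕ => (1 / 6 : ℝ) ^ l)
          · exact (summable_geometric_of_lt_one (by norm_num) (by norm_num)).mul_left B
          · exact summable_geometric_of_lt_one (by norm_num) (by norm_num)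
          · intro k
            exact mul_nonneg hB0 (by positivity)
          · intro l
            positivity
        · rintro ⟨k, l⟩
          have h1 : ‖e (k, l)‖ = ‖cb k‖ * ‖Q k l‖ * ‖z‖ ^ (k + l) := by
            rw [hedef]
            simp [norm_mul, norm_pow]
          rw [h1]
          have hz8 : ‖z‖ ≤ 1 / 8 := le_of_lt hz
          calc ‖cb k‖ * ‖Q k l‖ * ‖z‖ ^ (k + l)
              ≤ (B * 2 ^ k) * ((4 / 3 : ℝ) ^ l) * ((1 / 8 : ℝ) ^ (k + l)) := by
                gcongr
                · exact hcbB k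
                · exact hQb k l
            _ = (B * (1 / 4 : ℝ) ^ k) * (1 / 6 : ℝ) ^ l := by
                rw [pow_add]
                rw [show ((1:ℝ)/4) = 2 * (1/8) by norm_num,
                  show ((1:ℝ)/6) = (4/3) * (1/8) by norm_num, mul_pow, mul_pow]
                ring
      have hfib : ∀ k : ℕ, HasSum (fun l => e (k, l)) (cb k * ω z ^ k) := by
        intro k
        have h := (hQsum k z hz1).mul_right (cb k * z ^ k)
        have heq : (fun l => Q k l * z ^ l * (cb k * z ^ k)) = fun l => e (k, l) := by
          funext l
          rw [hedef]
          show Q k l * z ^ l * (cb k * z ^ k) = cb k * Q k l * z ^ (k + l)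
          rw [pow_add]
          ring
        rw [heq] at h
        have hval : φ z ^ k * (cb k * z ^ k) = cb k * ω z ^ k := by
          rw [hωφ z, mul_pow]
          ring
        rwa [hval] at h
      have htg : HasSum (fun k => cb k * ω z ^ k) (Tg (ω z)) := hTg (ω z) hωz
      have hetot : HasSum e (Tf z) := by
        have h1 := hte.hasSum
        have h2 : HasSum (fun k => cb k * ω z ^ k) (∑' p, e p) := h1.prod_fiberwise hfib
        rw [hsub z hz1, ← h2.unique htg]
        exact h1
      have h3 : HasSum (fun x : Σ n : ℕ, (Finset.HasAntidiagonal.antidiagonal n : Finset (ℕ × ℕ)) =>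
          e (x.2 : ℕ × ℕ)) (Tf z) :=
        (Finset.HasAntidiagonal.sigmaAntidiagonalEquivProd.hasSum_iff).2 hetot
      refine h3.sigma fun n => ?_
      have h5 := hasSum_fintype (fun p : (Finset.HasAntidiagonal.antidiagonal n : Finset (ℕ × ℕ)) => e (p : ℕ × ℕ))
      have hval : ∑ p : (Finset.HasAntidiagonal.antidiagonal n : Finset (ℕ × ℕ)), e (p : ℕ × ℕ) = d n * z ^ n := by
        rw [Finset.sum_coe_sort (Finset.HasAntidiagonal.antidiagonal n) (fun p => e p),
          Finset.Nat.sum_antidiagonal_eq_sum_range_succ_mk, hddef]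
        show _ = (∑ k ∈ Finset.range (n + 1), cb k * Q k (n - k)) * z ^ n
        rw [Finset.sum_mul]
        refine Finset.sum_congr rfl fun k hk => ?_
        rw [Finset.mem_range] at hk
        have hkn : k + (n - k) = n := by omega
        rw [hedef]
        show cb k * Q k (n - k) * z ^ (k + (n - k)) = cb k * Q k (n - k) * z ^ n
        rw [hkn]
      rwa [hval] at h5
  -- final assembly
  have hshift : ∑' n : ℕ, ENNReal.ofReal (‖a n‖ * r ^ n)
      = ∑' j : ℕ, ENNReal.ofReal (‖a (j + m)‖ * r ^ (j + m)) := by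
    apply aux_shift
    intro n hn
    rw [ha0 n hn]
    simp
  set T : ℕ → ℕ → ℝ≥0∞ := fun k l => ENNReal.ofReal (‖cb k‖ * r ^ k) *
    ENNReal.ofReal (‖Q k l‖ / ‖c (l + m)‖ * r ^ (l + m)) with hTdef
  have hpoint : ∀ j : ℕ, ENNReal.ofReal (‖a (j + m)‖ * r ^ (j + m)) ≤
      ∑ k ∈ Finset.range (j + 1), T k (j - k) := by
    intro j
    have hAd' : c (j + m) * a (j + m) = d j := congrFun hAd j
    have hnorm_a : ‖a (j + m)‖ = ‖d j‖ / ‖c (j + m)‖ := by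
      rw [← hAd', norm_mul, mul_comm, mul_div_assoc, div_self (ne_of_gt (hcpos j)), mul_one]
    have hdb : ‖d j‖ ≤ ∑ k ∈ Finset.range (j + 1), ‖cb k‖ * ‖Q k (j - k)‖ := by
      rw [hddef]
      refine (norm_sum_le _ _).trans (le_of_eq ?_)
      exact Finset.sum_congr rfl fun k _ => norm_mul _ _
    rw [hnorm_a]
    calc ENNReal.ofReal (‖d j‖ / ‖c (j + m)‖ * r ^ (j + m))
        ≤ ENNReal.ofReal ((∑ k ∈ Finset.range (j + 1), ‖cb k‖ * ‖Q k (j - k)‖)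
            / ‖c (j + m)‖ * r ^ (j + m)) := by
          apply ENNReal.ofReal_le_ofReal
          gcongr
      _ = ∑ k ∈ Finset.range (j + 1),
          ENNReal.ofReal (‖cb k‖ * ‖Q k (j - k)‖ / ‖c (j + m)‖ * r ^ (j + m)) := by
          rw [Finset.sum_div, Finset.sum_mul,
            ENNReal.ofReal_sum_of_nonneg (fun k _ => by positivity)]
      _ ≤ ∑ k ∈ Finset.range (j + 1), T k (j - k) := by
          apply Finset.sum_le_sum
          intro k hk
          rw [Finset.mem_range] at hk
          have hkj : k ≤ j := by omega
          simp only [hTdef]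
          rw [← ENNReal.ofReal_mul (by positivity)]
          apply ENNReal.ofReal_le_ofReal
          have hre : r ^ (j + m) = r ^ k * r ^ (j - k + m) := by
            rw [← pow_add]
            congr 1
            omega
          have hcle : ‖c (j - k + m)‖ ≤ ‖c (j + m)‖ := by
            have h2 := hmono' (j - k) k
            rwa [show k + (j - k) + m = j + m by omega] at h2
          calc ‖cb k‖ * ‖Q k (j - k)‖ / ‖c (j + m)‖ * r ^ (j + m)
              ≤ ‖cb k‖ * ‖Q k (j - k)‖ / ‖c (j - k + m)‖ * r ^ (j + m) := by
                gcongr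
                · exact hcpos _
              _ = ‖cb k‖ * r ^ k * (‖Q k (j - k)‖ / ‖c (j - k + m)‖ * r ^ (j - k + m)) := by
                rw [hre]; ring
  calc ∑' n : ℕ, ENNReal.ofReal (‖a n‖ * r ^ n)
      = ∑' j : ℕ, ENNReal.ofReal (‖a (j + m)‖ * r ^ (j + m)) := hshift
    _ ≤ ∑' j : ℕ, ∑ k ∈ Finset.range (j + 1), T k (j - k) := ENNReal.tsum_le_tsum hpoint
    _ = ∑' k : ℕ, ∑' l : ℕ, T k l := aux_regroup T
    _ ≤ ∑' k : ℕ, ENNReal.ofReal (‖cb k‖ * r ^ k) := by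
        refine ENNReal.tsum_le_tsum fun k => ?_
        rw [hTdef]
        rw [ENNReal.tsum_mul_left]
        calc ENNReal.ofReal (‖cb k‖ * r ^ k) *
            ∑' l, ENNReal.ofReal (‖Q k l‖ / ‖c (l + m)‖ * r ^ (l + m))
            ≤ ENNReal.ofReal (‖cb k‖ * r ^ k) * 1 := by
              exact mul_le_mul_right (hKle k) _
          _ = ENNReal.ofReal (‖cb k‖ * r ^ k) := mul_one _
    _ = ∑' n : ℕ, ENNReal.ofReal (‖c (n + m) * b (n + m)‖ * r ^ n) := rfl
end

section
/- Let m ∈ ℕ and let c_n ∈ ℂ (n ≥ m) satisfy 0 < |c_m| and |c_n| ≤ |c_{n+1}| for all n ≥ m; let T denote the operator T f(z) := ∑_{n≥m} c_n a_n z^{n−m} for f(z) = ∑_{n≥m} a_n zⁿ. Let r ≥ 0 be such that for every F(z) = ∑_{n≥m} F_n zⁿ for which T F := ∑_{n≥m} c_n F_n z^{n−m} converges on 𝔻 and satisfies sup_{z∈𝔻} |T F(z)| ≤ 1, one has ∑_{n≥m} |F_n| ρⁿ ≤ 1 for all ρ ∈ [0, r]. Suppose f(z) = ∑_{n≥m}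 a_n zⁿ and g(z) = ∑_{n≥m} b_n zⁿ are such that T f and T g are analytic on 𝔻 and |T f(z)| ≤ |T g(z)| for all z ∈ 𝔻. Then ∑_{n≥m} |a_n| rⁿ ≤ ∑_{n≥m} |c_n b_n| r^{n−m}, i.e. M_r f ≤ M_r(T g). -/
open Metric Filter Set Topology NNReal ENNReal

noncomputable section MajAux

private lemma ofScalars_coeff (s : ℕ → ℂ) (n : ℕ) :
    (FormalMultilinearSeries.ofScalars ℂ s).coeff n = s n := by
  simpa using FormalMultilinearSeries.ofScalars_apply_eq (E := ℂ) s 1 n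

private lemma emetric_ball_one : Metric.eball (0:ℂ) 1 = Metric.ball (0:ℂ) 1 := by
  rw [← ENNReal.coe_one, Metric.emetric_ball_nnreal, NNReal.coe_one]

/-- A pointwise power series representation on the unit ball gives a
`HasFPowerSeriesOnBall` with radius `1`. -/
private lemma hasFPSOB (s : ℕ → ℂ) (T : ℂ → ℂ)
    (hT : ∀ z ∈ Metric.ball (0:ℂ) 1, HasSum (fun n => s n * z ^ n) (T z)) :
    HasFPowerSeriesOnBall T (FormalMultilinearSeries.ofScalars ℂ s) 0 1 := by
  constructor
  · refine ENNReal.le_of_forall_nnreal_lt fun t ht => ?_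
    have ht1 : (t : ℝ) < 1 := by exact_mod_cast ht
    have hz : ((t:ℝ) : ℂ) ∈ Metric.ball (0:ℂ) 1 := by
      simp [mem_ball_zero_iff, abs_of_nonneg t.coe_nonneg, ht1]
    have h0 : Tendsto (fun n => ‖s n * ((t:ℝ):ℂ) ^ n‖) atTop (𝓝 0) := by
      simpa using ((hT _ hz).summable.tendsto_atTop_zero).norm
    obtain ⟨C, hC⟩ := h0.bddAbove_range
    refine FormalMultilinearSeries.le_radius_of_bound _ C fun n => ?_
    have h1 := hC ⟨n, rfl⟩
    simpa [FormalMultilinearSeries.ofScalars_norm, norm_mul, norm_pow,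
      abs_of_nonneg t.coe_nonneg, ofScalars_coeff] using h1
  · exact one_pos
  · intro y hy
    rw [emetric_ball_one] at hy
    simpa [FormalMultilinearSeries.ofScalars_apply_eq, smul_eq_mul, ofScalars_coeff,
      mul_comm] using hT y hy

/-- Existence of the Schur-type quotient `ω` with `Tf = ω * Tg`. -/
private lemma exists_omega (Tf Tg : ℂ → ℂ)
    (hfd : DifferentiableOn ℂ Tf (Metric.ball 0 1))
    (hgd : DifferentiableOn ℂ Tg (Metric.ball 0 1))
    (hmaj : ∀ z ∈ Metric.ball (0:ℂ) 1, ‖Tf z‖ ≤ ‖Tg z‖) :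
    ∃ ω : ℂ → ℂ, DifferentiableOn ℂ ω (Metric.ball 0 1) ∧
      (∀ z ∈ Metric.ball (0:ℂ) 1, ‖ω z‖ ≤ 1) ∧
      (∀ z ∈ Metric.ball (0:ℂ) 1, Tf z = ω z * Tg z) := by
  classical
  have hTf0 : ∀ z ∈ Metric.ball (0:ℂ) 1, Tg z = 0 → Tf z = 0 := by
    intro z hz h0
    have := hmaj z hz
    rw [h0] at this
    simpa using norm_le_zero_iff.mp (by simpa using this)
  by_cases hzero : ∀ z ∈ Metric.ball (0:ℂ) 1, Tg z = 0
  · refine ⟨fun _ => 0, differentiableOn_const 0, by simp, fun z hz => ?_⟩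
    simp [hTf0 z hz (hzero z hz)]
  · push_neg at hzero
    obtain ⟨z₀, hz₀, hz₀ne⟩ := hzero
    have hBo : IsOpen (Metric.ball (0:ℂ) 1) := isOpen_ball
    have hga : AnalyticOnNhd ℂ Tg (Metric.ball (0:ℂ) 1) := hgd.analyticOnNhd hBo
    have hiso : ∀ z ∈ Metric.ball (0:ℂ) 1, Tg z = 0 → ∀ᶠ w in 𝓝[≠] z, Tg w ≠ 0 := by
      intro z hz hz0
      rcases (hga z hz).eventually_eq_zero_or_eventually_ne_zero with h | h
      · exact absurd (hga.eqOn_zero_of_preconnected_of_eventuallyEq_zero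
          ((convex_ball (0:ℂ) 1).isPreconnected) hz h hz₀) hz₀ne
      · exact h
    set q : ℂ → ℂ := fun w => Tf w / Tg w with hqdef
    set ω : ℂ → ℂ := fun z => if Tg z = 0 then limUnder (𝓝[≠] z) q else q z with hωdef
    have hqb : ∀ w ∈ Metric.ball (0:ℂ) 1, Tg w ≠ 0 → ‖q w‖ ≤ 1 := by
      intro w hw hne
      rw [hqdef]
      simp only [norm_div]
      rw [div_le_one (norm_pos_iff.mpr hne)]
      exact hmaj w hw
    have hdiff : ∀ z ∈ Metric.ball (0:ℂ) 1, DifferentiableAt ℂ ω z := by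
      intro z hz
      by_cases hzg : Tg z = 0
      · have hev : ∀ᶠ w in 𝓝 z, w ≠ z → (Tg w ≠ 0 ∧ w ∈ Metric.ball (0:ℂ) 1) := by
          have h1 := hiso z hz hzg
          have h2 : ∀ᶠ w in 𝓝[≠] z, w ∈ Metric.ball (0:ℂ) 1 :=
            eventually_nhdsWithin_of_eventually_nhds (hBo.eventually_mem hz)
          exact eventually_nhdsWithin_iff.mp (h1.and h2)
        obtain ⟨ε, hε, hball⟩ := Metric.eventually_nhds_iff_ball.mp hev
        have hc : Metric.ball z ε ∈ 𝓝 z := Metric.ball_mem_nhds z hε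
        have hd : DifferentiableOn ℂ q (Metric.ball z ε \ {z}) := by
          rintro w ⟨hw, hwz⟩
          have hwz' : w ≠ z := hwz
          obtain ⟨hgne, hwB⟩ := hball w hw hwz'
          exact ((hfd.differentiableAt (hBo.mem_nhds hwB)).div
            (hgd.differentiableAt (hBo.mem_nhds hwB)) hgne).differentiableWithinAt
        have hb : BddAbove (norm ∘ q '' (Metric.ball z ε \ {z})) := by
          refine ⟨1, ?_⟩
          rintro x ⟨w, ⟨hw, hwz⟩, rfl⟩
          obtain ⟨hgne, hwB⟩ := hball w hw hwz
          exact hqb w hwB hgne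
        have hupd := Complex.differentiableOn_update_limUnder_of_bddAbove hc hd hb
        have hda := hupd.differentiableAt hc
        have heq : ω =ᶠ[𝓝 z] Function.update q z (limUnder (𝓝[≠] z) q) := by
          filter_upwards [hc] with w hw
          by_cases hwz : w = z
          · subst hwz
            simp [hωdef, hzg, Function.update_self]
          · obtain ⟨hgne, _⟩ := hball w hw hwz
            simp [hωdef, hgne, Function.update_of_ne hwz]
        exact heq.differentiableAt_iff.mpr hda
      · have hcg : ContinuousAt Tg z := (hgd.differentiableAt (hBo.mem_nhds hz)).continuousAt
        have hev : ∀ᶠ w in 𝓝 z, Tg w ≠ 0 := hcg.eventually_ne hzg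
        have heq : ω =ᶠ[𝓝 z] q := by
          filter_upwards [hev] with w hw
          simp [hωdef, hw]
        exact heq.differentiableAt_iff.mpr
          ((hfd.differentiableAt (hBo.mem_nhds hz)).div
            (hgd.differentiableAt (hBo.mem_nhds hz)) hzg)
    refine ⟨ω, fun z hz => (hdiff z hz).differentiableWithinAt, ?_, ?_⟩
    · intro z hz
      by_cases hzg : Tg z = 0
      · have hcont : Tendsto ω (𝓝[≠] z) (𝓝 (ω z)) :=
          ((hdiff z hz).continuousAt.tendsto).mono_left nhdsWithin_le_nhds
        have hev : ∀ᶠ w in 𝓝[≠] z, ‖ω w‖ ≤ 1 := by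
          have h1 := hiso z hz hzg
          have h2 : ∀ᶠ w in 𝓝[≠] z, w ∈ Metric.ball (0:ℂ) 1 :=
            eventually_nhdsWithin_of_eventually_nhds (hBo.eventually_mem hz)
          filter_upwards [h1, h2] with w hw1 hw2
          simpa [hωdef, hw1] using hqb w hw2 hw1
        exact le_of_tendsto hcont.norm hev
      · simpa [hωdef, hzg] using hqb z hz hzg
    · intro z hz
      by_cases hzg : Tg z = 0
      · simp [hTf0 z hz hzg, hzg]
      · have hω : ω z = Tf z / Tg z := by simp [hωdef, hqdef, hzg]
        rw [hω, div_mul_cancel₀ _ hzg]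

private lemma tsum_shift (m : ℕ) (h : ℕ → ENNReal) (h0 : ∀ n < m, h n = 0) :
    ∑' k : ℕ, h (k + m) = ∑' n : ℕ, h n := by
  refine Function.Injective.tsum_eq (add_left_injective m) ?_
  intro n hn
  rcases le_or_gt m n with hm | hm
  · exact ⟨n - m, Nat.sub_add_cancel hm⟩
  · exact absurd (h0 n hm) hn

end MajAux
theorem majorant_series_comparison_majorization
    (m : ℕ) (c : ℕ → ℂ) (hcm : 0 < ‖c m‖)
    (hmono : ∀ n, m ≤ n → ‖c n‖ ≤ ‖c (n + 1)‖)
    (r : ℝ) (hr0 : 0 ≤ r)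
    (hbohr : ∀ (F : ℕ → ℂ) (G : ℂ → ℂ),
      (∀ n, n < m → F n = 0) →
      (∀ z ∈ Metric.ball (0 : ℂ) 1,
        HasSum (fun n : ℕ => c (n + m) * F (n + m) * z ^ n) (G z)) →
      (∀ z ∈ Metric.ball (0 : ℂ) 1, ‖G z‖ ≤ 1) →
      ∀ ρ : ℝ, 0 ≤ ρ → ρ ≤ r →
        ∑' n : ℕ, ENNReal.ofReal (‖F n‖ * ρ ^ n) ≤ 1)
    (a b : ℕ → ℂ) (ha0 : ∀ n, n < m → a n = 0) (hb0 : ∀ n, n < m → b n = 0)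
    (Tf Tg : ℂ → ℂ)
    (hTf : ∀ z ∈ Metric.ball (0 : ℂ) 1,
      HasSum (fun n : ℕ => c (n + m) * a (n + m) * z ^ n) (Tf z))
    (hTg : ∀ z ∈ Metric.ball (0 : ℂ) 1,
      HasSum (fun n : ℕ => c (n + m) * b (n + m) * z ^ n) (Tg z))
    (hmaj : ∀ z ∈ Metric.ball (0 : ℂ) 1, ‖Tf z‖ ≤ ‖Tg z‖) :
    ∑' n : ℕ, ENNReal.ofReal (‖a n‖ * r ^ n)
      ≤ ∑' n : ℕ, ENNReal.ofReal (‖c (n + m) * b (n + m)‖ * r ^ n) := by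
  classical
  have hmono' : ∀ s t : ℕ, m ≤ s → s ≤ t → ‖c s‖ ≤ ‖c t‖ := by
    intro s t hms hst
    induction t, hst using Nat.le_induction with
    | base => exact le_rfl
    | succ t hst ih => exact ih.trans (hmono t (hms.trans hst))
  have hcpos : ∀ k : ℕ, 0 < ‖c (k + m)‖ := fun k =>
    lt_of_lt_of_le hcm (hmono' m (k + m) le_rfl (Nat.le_add_left m k))
  have hcne : ∀ k : ℕ, c (k + m) ≠ 0 := fun k => norm_pos_iff.mp (hcpos k)
  have hpf := hasFPSOB (fun n => c (n + m) * a (n + m)) Tf hTf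
  have hpg := hasFPSOB (fun n => c (n + m) * b (n + m)) Tg hTg
  have hfd : DifferentiableOn ℂ Tf (Metric.ball 0 1) := by
    have := hpf.differentiableOn; rwa [emetric_ball_one] at this
  have hgd : DifferentiableOn ℂ Tg (Metric.ball 0 1) := by
    have := hpg.differentiableOn; rwa [emetric_ball_one] at this
  obtain ⟨ω, hωd, hωb, hωeq⟩ := exists_omega Tf Tg hfd hgd hmaj
  -- power series of ω
  have hhalf : Metric.closedBall (0:ℂ) ((1/2 : ℝ≥0) : ℝ) ⊆ Metric.ball 0 1 := by
    intro x hx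
    rw [Metric.mem_closedBall, dist_zero_right] at hx
    rw [mem_ball_zero_iff]
    calc ‖x‖ ≤ ((1/2 : ℝ≥0) : ℝ) := hx
      _ < 1 := by norm_num
  set p := cauchyPowerSeries ω 0 ((1/2 : ℝ≥0) : ℝ) with hpdef
  have hp2 : HasFPowerSeriesOnBall ω p 0 ((1/2 : ℝ≥0) : ℝ≥0∞) :=
    (hωd.mono hhalf).hasFPowerSeriesOnBall (by norm_num)
  set w : ℕ → ℂ := fun k => p.coeff k with hwdef
  have hωsum : ∀ z ∈ Metric.ball (0:ℂ) 1,
      HasSum (fun k => w k * z ^ k) (ω z) ∧ Summable (fun k => ‖w k * z ^ k‖) := by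
    intro z hz
    rw [mem_ball_zero_iff] at hz
    have h0 : (0:ℝ) ≤ ‖z‖ := norm_nonneg z
    set R : ℝ≥0 := ⟨(‖z‖ + 1) / 2, by positivity⟩ with hRdef
    have hRcoe : (R : ℝ) = (‖z‖ + 1) / 2 := rfl
    have hzR : ‖z‖ < (R : ℝ) := by rw [hRcoe]; linarith
    have hR1 : (R : ℝ) < 1 := by rw [hRcoe]; linarith
    have hRpos : 0 < R := by
      have : (0:ℝ) < (R : ℝ) := lt_of_le_of_lt h0 hzR
      exact_mod_cast this
    have hsub : Metric.closedBall (0:ℂ) (R : ℝ) ⊆ Metric.ball 0 1 := by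
      intro x hx
      rw [Metric.mem_closedBall, dist_zero_right] at hx
      rw [mem_ball_zero_iff]; linarith
    have hpR := (hωd.mono hsub).hasFPowerSeriesOnBall hRpos
    have hEq : cauchyPowerSeries ω 0 (R : ℝ) = p :=
      hpR.hasFPowerSeriesAt.eq_formalMultilinearSeries hp2.hasFPowerSeriesAt
    have hmem : z ∈ Metric.eball (0:ℂ) ((R : ℝ≥0) : ℝ≥0∞) := by
      rw [Metric.emetric_ball_nnreal]
      exact mem_ball_zero_iff.mpr hzR
    constructor
    · have h1 := hpR.hasSum hmem
      rw [hEq] at h1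
      simpa [FormalMultilinearSeries.apply_eq_prod_smul_coeff, Finset.prod_const,
        Finset.card_univ, Fintype.card_fin, smul_eq_mul, mul_comm, hwdef] using h1
    · have hmem2 : z ∈ Metric.eball (0:ℂ) (cauchyPowerSeries ω 0 (R : ℝ)).radius :=
        Metric.eball_subset_eball hpR.r_le hmem
      have h2 := (cauchyPowerSeries ω 0 (R : ℝ)).summable_norm_apply hmem2
      rw [hEq] at h2
      refine h2.congr fun k => ?_
      rw [FormalMultilinearSeries.apply_eq_prod_smul_coeff]
      simp [norm_smul, norm_mul, mul_comm, hwdef]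
  -- Bohr bound for the coefficients of ω
  have hωcoef : ∑' k : ℕ, ENNReal.ofReal (‖w k / c (k + m)‖ * r ^ (k + m)) ≤ 1 := by
    set F : ℕ → ℂ := fun n => if m ≤ n then w (n - m) / c n else 0 with hFdef
    have h1 : ∀ n, n < m → F n = 0 := by
      intro n hn
      simp [hFdef, Nat.not_le.mpr hn]
    have hFm : ∀ k : ℕ, F (k + m) = w k / c (k + m) := by
      intro k
      simp [hFdef, Nat.le_add_left m k]
    have h2 : ∀ z ∈ Metric.ball (0:ℂ) 1,
        HasSum (fun n => c (n + m) * F (n + m) * z ^ n) (ω z) := by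
      intro z hz
      have heq : (fun n => c (n + m) * F (n + m) * z ^ n) = fun n => w n * z ^ n := by
        funext n
        rw [hFm n, mul_comm (c (n + m)), div_mul_cancel₀ _ (hcne n)]
      rw [heq]
      exact (hωsum z hz).1
    have h3 := hbohr F ω h1 h2 hωb r hr0 le_rfl
    calc ∑' k : ℕ, ENNReal.ofReal (‖w k / c (k + m)‖ * r ^ (k + m))
        = ∑' k : ℕ, ENNReal.ofReal (‖F (k + m)‖ * r ^ (k + m)) := by
          exact tsum_congr fun k => by rw [hFm k]
      _ = ∑' n : ℕ, ENNReal.ofReal (‖F n‖ * r ^ n) :=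
          tsum_shift m (fun n => ENNReal.ofReal (‖F n‖ * r ^ n))
            (fun n hn => by simp [h1 n hn])
      _ ≤ 1 := h3
  -- convolution identity for the coefficients
  have hconv : (fun n => c (n + m) * a (n + m))
      = fun n => ∑ kj ∈ Finset.HasAntidiagonal.antidiagonal n, w kj.1 * (c (kj.2 + m) * b (kj.2 + m)) := by
    set d : ℕ → ℂ :=
      fun n => ∑ kj ∈ Finset.HasAntidiagonal.antidiagonal n, w kj.1 * (c (kj.2 + m) * b (kj.2 + m)) with hddef
    have hsum : ∀ z ∈ Metric.ball (0:ℂ) 1, HasSum (fun n => d n * z ^ n) (Tf z) := by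
      intro z hz
      obtain ⟨hω1, hωn⟩ := hωsum z hz
      have hgn : Summable (fun n => ‖(c (n + m) * b (n + m)) * z ^ n‖) := by
        have hmem : z ∈ Metric.eball (0:ℂ)
            (FormalMultilinearSeries.ofScalars ℂ (fun n => c (n + m) * b (n + m))).radius := by
          refine Metric.eball_subset_eball hpg.r_le ?_
          rw [emetric_ball_one]; exact hz
        have h2 := (FormalMultilinearSeries.ofScalars ℂ
          (fun n => c (n + m) * b (n + m))).summable_norm_apply hmem
        refine h2.congr fun k => ?_
        rw [FormalMultilinearSeries.ofScalars_apply_eq]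
        simp [smul_eq_mul, norm_mul]
      have hprod := tsum_mul_tsum_eq_tsum_sum_antidiagonal_of_summable_norm hωn hgn
      have hS : Summable (fun n => ∑ kj ∈ Finset.HasAntidiagonal.antidiagonal n,
          (w kj.1 * z ^ kj.1) * ((c (kj.2 + m) * b (kj.2 + m)) * z ^ kj.2)) :=
        (summable_norm_sum_mul_antidiagonal_of_summable_norm hωn hgn).of_norm
      rw [hω1.tsum_eq, (hTg z hz).tsum_eq] at hprod
      have hfeq : Tf z = ∑' n, ∑ kj ∈ Finset.HasAntidiagonal.antidiagonal n,
          (w kj.1 * z ^ kj.1) * ((c (kj.2 + m) * b (kj.2 + m)) * z ^ kj.2) := by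
        rw [hωeq z hz, hprod]
      have hterm : (fun n => ∑ kj ∈ Finset.HasAntidiagonal.antidiagonal n,
            (w kj.1 * z ^ kj.1) * ((c (kj.2 + m) * b (kj.2 + m)) * z ^ kj.2))
          = fun n => d n * z ^ n := by
        funext n
        rw [hddef]
        simp only
        rw [Finset.sum_mul]
        refine Finset.sum_congr rfl fun kj hkj => ?_
        have hkjn : kj.1 + kj.2 = n := Finset.HasAntidiagonal.mem_antidiagonal.mp hkj
        rw [← hkjn, pow_add]; ring
      rw [hterm] at hfeq hS
      have := hS.hasSum
      rwa [← hfeq] at this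
    have h1 := (hasFPSOB (fun n => c (n + m) * a (n + m)) Tf hTf).hasFPowerSeriesAt
    have h2 := (hasFPSOB d Tf hsum).hasFPowerSeriesAt
    exact FormalMultilinearSeries.ofScalars_series_injective ℂ ℂ
      (h1.eq_formalMultilinearSeries h2)
  -- final computation
  set x : ℕ → ℝ := fun k => ‖w k / c (k + m)‖ * r ^ (k + m) with hxdef
  set y : ℕ → ℝ := fun j => ‖c (j + m) * b (j + m)‖ * r ^ j with hydef
  have hx0 : ∀ k, 0 ≤ x k := fun k => by
    rw [hxdef]; positivity
  have hy0 : ∀ j, 0 ≤ y j := fun j => by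
    rw [hydef]; positivity
  have hbound : ∀ k : ℕ,
      ‖a (k + m)‖ * r ^ (k + m) ≤ ∑ ij ∈ Finset.HasAntidiagonal.antidiagonal k, x ij.1 * y ij.2 := by
    intro k
    have hck := hcpos k
    have h1 : ‖a (k + m)‖ * r ^ (k + m)
        = ‖c (k + m) * a (k + m)‖ / ‖c (k + m)‖ * r ^ (k + m) := by
      rw [norm_mul, mul_comm ‖c (k + m)‖, mul_div_assoc, div_self (ne_of_gt hck), mul_one]
    rw [h1]
    have h2 : ‖c (k + m) * a (k + m)‖
        ≤ ∑ ij ∈ Finset.HasAntidiagonal.antidiagonal k, ‖w ij.1‖ * ‖c (ij.2 + m) * b (ij.2 + m)‖ := by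
      rw [congrFun hconv k]
      refine (norm_sum_le _ _).trans ?_
      refine Finset.sum_le_sum fun ij _ => ?_
      rw [norm_mul]
    calc ‖c (k + m) * a (k + m)‖ / ‖c (k + m)‖ * r ^ (k + m)
        ≤ (∑ ij ∈ Finset.HasAntidiagonal.antidiagonal k, ‖w ij.1‖ * ‖c (ij.2 + m) * b (ij.2 + m)‖)
            / ‖c (k + m)‖ * r ^ (k + m) := by gcongr
      _ = ∑ ij ∈ Finset.HasAntidiagonal.antidiagonal k,
            ‖w ij.1‖ * ‖c (ij.2 + m) * b (ij.2 + m)‖ / ‖c (k + m)‖ * r ^ (k + m) := by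
          rw [Finset.sum_div, Finset.sum_mul]
      _ ≤ ∑ ij ∈ Finset.HasAntidiagonal.antidiagonal k, x ij.1 * y ij.2 := by
          refine Finset.sum_le_sum fun ij hij => ?_
          have hijk : ij.1 + ij.2 = k := Finset.HasAntidiagonal.mem_antidiagonal.mp hij
          have hci : ‖c (ij.1 + m)‖ ≤ ‖c (k + m)‖ :=
            hmono' (ij.1 + m) (k + m) (Nat.le_add_left m _) (by omega)
          have hcipos := hcpos ij.1
          rw [hxdef, hydef]
          simp only
          rw [norm_div]
          have hrpow : r ^ (k + m) = r ^ (ij.1 + m) * r ^ ij.2 := by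
            rw [← pow_add]; congr 1; omega
          rw [hrpow]
          calc ‖w ij.1‖ * ‖c (ij.2 + m) * b (ij.2 + m)‖ / ‖c (k + m)‖
                * (r ^ (ij.1 + m) * r ^ ij.2)
              ≤ ‖w ij.1‖ * ‖c (ij.2 + m) * b (ij.2 + m)‖ / ‖c (ij.1 + m)‖
                * (r ^ (ij.1 + m) * r ^ ij.2) := by
                gcongr
            _ = ‖w ij.1‖ / ‖c (ij.1 + m)‖ * r ^ (ij.1 + m)
                * (‖c (ij.2 + m) * b (ij.2 + m)‖ * r ^ ij.2) := by ring
  calc ∑' n : ℕ, ENNReal.ofReal (‖a n‖ * r ^ n)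
      = ∑' k : ℕ, ENNReal.ofReal (‖a (k + m)‖ * r ^ (k + m)) :=
        (tsum_shift m (fun n => ENNReal.ofReal (‖a n‖ * r ^ n))
          (fun n hn => by simp [ha0 n hn])).symm
    _ ≤ ∑' k : ℕ, ENNReal.ofReal (∑ ij ∈ Finset.HasAntidiagonal.antidiagonal k, x ij.1 * y ij.2) :=
        ENNReal.tsum_le_tsum fun k => ENNReal.ofReal_le_ofReal (hbound k)
    _ = ∑' k : ℕ, ∑ ij ∈ Finset.HasAntidiagonal.antidiagonal k, ENNReal.ofReal (x ij.1 * y ij.2) :=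
        tsum_congr fun k => ENNReal.ofReal_sum_of_nonneg fun ij _ =>
          mul_nonneg (hx0 _) (hy0 _)
    _ = ∑' ij : ℕ × ℕ, ENNReal.ofReal (x ij.1 * y ij.2) := by
        rw [← Finset.HasAntidiagonal.sigmaAntidiagonalEquivProd.tsum_eq
          (fun ij : ℕ × ℕ => ENNReal.ofReal (x ij.1 * y ij.2))]
        rw [ENNReal.tsum_sigma']
        exact tsum_congr fun k => (Finset.tsum_subtype (Finset.HasAntidiagonal.antidiagonal k)
          (fun ij => ENNReal.ofReal (x ij.1 * y ij.2))).symm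
    _ = (∑' k : ℕ, ENNReal.ofReal (x k)) * (∑' j : ℕ, ENNReal.ofReal (y j)) := by
        rw [ENNReal.tsum_prod']
        calc ∑' (i : ℕ) (j : ℕ), ENNReal.ofReal (x i * y j)
            = ∑' (i : ℕ) (j : ℕ), ENNReal.ofReal (x i) * ENNReal.ofReal (y j) :=
              tsum_congr fun i => tsum_congr fun j => ENNReal.ofReal_mul (hx0 i)
          _ = ∑' i : ℕ, ENNReal.ofReal (x i) * ∑' j : ℕ, ENNReal.ofReal (y j) :=
              tsum_congr fun i => ENNReal.tsum_mul_left
          _ = _ := ENNReal.tsum_mul_right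
    _ ≤ 1 * ∑' j : ℕ, ENNReal.ofReal (y j) := mul_le_mul_left hωcoef _
    _ = ∑' n : ℕ, ENNReal.ofReal (‖c (n + m) * b (n + m)‖ * r ^ n) := one_mul _
end
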